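/- Let (A,·,α) be a finite-dimensional Hom-pre-Lie algebra and let B be a symmetric nondegenerate bilinear form on A, with associated isomorphism B♯ : A → A* given by ⟨B♯(x), y⟩ = B(x,y). Then B is a Hessian structure on (A,·,α) if and only if (B♯)^{-1} : A* → A is an O-operator on (A,·,α) with respect to the representation (A*, (α^{-1})*, L⋆ − R⋆, −R⋆), where ⟨L⋆(x)(ξ), u⟩ = −⟨ξ, α^{-2}(α(x)·u)⟩ and ⟨R⋆(x)(ξ), u⟩ = −⟨ξ, α^{-2}(u·α(x))⟩ for x,u ∈ A, ξ ∈ A*. -/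

import Mathlib

/-- A Hom-pre-Lie algebra structure on `A`: a bilinear product and an algebra
morphism `α` satisfying the Hom-pre-Lie identity. -/
def IsHomPreLie {K A : Type*} [Field K] [AddCommGroup A] [Module K A]
    (mul : A →ₗ[K] A →ₗ[K] A) (α : A →ₗ[K] A) : Prop :=
  (∀ x y, α (mul x y) = mul (α x) (α y)) ∧
  (∀ x y z, mul (mul x y) (α z) - mul (α x) (mul y z)
      = mul (mul y x) (α z) - mul (α y) (mul x z))

/-- A representation of a Hom-Lie algebra `(L, bracket, α)` on `V` with respect to `β`. -/
def IsHomLieRep {K L V : Type*} [Field K] [AddCommGroup L] [Module K L]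
    [AddCommGroup V] [Module K V]
    (bracket : L →ₗ[K] L →ₗ[K] L) (α : L →ₗ[K] L)
    (β : V →ₗ[K] V) (ρ : L →ₗ[K] Module.End K V) : Prop :=
  (∀ x, ρ (α x) ∘ₗ β = β ∘ₗ ρ x) ∧
  (∀ x y, ρ (bracket x y) ∘ₗ β = ρ (α x) ∘ₗ ρ y - ρ (α y) ∘ₗ ρ x)

/-- A representation `(V, β, ρ, μ)` of a Hom-pre-Lie algebra `(A, mul, α)`:
`ρ` is a representation of the sub-adjacent Hom-Lie algebra (whose bracket is the
commutator `mul - mul.flip`) with respect to `β`, together with the two compatibility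
conditions for `μ`. -/
def IsHomPreLieRep {K A V : Type*} [Field K] [AddCommGroup A] [Module K A]
    [AddCommGroup V] [Module K V]
    (mul : A →ₗ[K] A →ₗ[K] A) (α : A →ₗ[K] A)
    (β : V →ₗ[K] V) (ρ μ : A →ₗ[K] Module.End K V) : Prop :=
  IsHomLieRep (mul - mul.flip) α β ρ ∧
  (∀ x, β ∘ₗ μ x = μ (α x) ∘ₗ β) ∧
  (∀ x y, μ (α y) ∘ₗ μ x - μ (mul x y) ∘ₗ β = μ (α y) ∘ₗ ρ x - ρ (α x) ∘ₗ μ y)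

/-- The twisted dual map `ρ⋆ : A → gl(V*)`, defined by
`⟨ρ⋆(x)(ξ), u⟩ = −⟨ξ, β⁻²(ρ(α(x))(u))⟩`. -/
noncomputable def starRep {K A V : Type*} [Field K] [AddCommGroup A] [Module K A]
    [AddCommGroup V] [Module K V]
    (α : A →ₗ[K] A) (β : V ≃ₗ[K] V) (ρ : A →ₗ[K] Module.End K V) :
    A →ₗ[K] Module.End K (V →ₗ[K] K) where
  toFun x := - (((β.symm.toLinearMap ∘ₗ β.symm.toLinearMap) ∘ₗ ρ (α x)).dualMap :
      Module.End K (Module.Dual K V))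
  map_add' x y := by
    ext ξ u
    simp [LinearMap.dualMap_apply]
    abel
  map_smul' c x := by
    ext ξ u
    simp [LinearMap.dualMap_apply]

instance starRepAddCommGroup {K A V : Type*} [Field K] [AddCommGroup A] [Module K A]
    [AddCommGroup V] [Module K V] :
    AddCommGroup (A →ₗ[K] Module.End K (V →ₗ[K] K)) :=
  @LinearMap.addCommGroup K K A (Module.End K (V →ₗ[K] K)) _ _ _ _ _ _ _

/-- An `O`-operator `T : V → A` on a Hom-pre-Lie algebra `(A, mul, α)` with
respect to a representation `(V, β, ρ, μ)`:
`T ∘ β = α ∘ T` and `T(u)·T(v) = T(ρ(T(u))(v) + μ(T(v))(u))`. -/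
def IsOOperator {K A V : Type*} [Field K] [AddCommGroup A] [Module K A]
    [AddCommGroup V] [Module K V]
    (mul : A →ₗ[K] A →ₗ[K] A) (α : A →ₗ[K] A) (β : V →ₗ[K] V)
    (ρ μ : A →ₗ[K] Module.End K V) (T : V →ₗ[K] A) : Prop :=
  (∀ v, T (β v) = α (T v)) ∧
  (∀ u v, mul (T u) (T v) = T (ρ (T u) v + μ (T v) u))

/-- A Hessian structure on a Hom-pre-Lie algebra `(A, mul, α)`: a symmetric
nondegenerate bilinear form `B` which is `α`-invariant and a 2-cocycle with
coefficients in the trivial representation. -/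
def IsHessian {K A : Type*} [Field K] [AddCommGroup A] [Module K A]
    (mul : A →ₗ[K] A →ₗ[K] A) (α : A →ₗ[K] A) (B : A →ₗ[K] A →ₗ[K] K) : Prop :=
  (∀ x y, B x y = B y x) ∧
  (∀ x, (∀ y, B x y = 0) → x = 0) ∧
  (∀ x y, B (α x) (α y) = B x y) ∧
  (∀ x y z, B (mul x y) (α z) - B (α x) (mul y z)
      = B (mul y x) (α z) - B (α y) (mul x z))

theorem starRepAddCommGroup_sub_apply {K A V : Type*} [Field K] [AddCommGroup A] [Module K A]
    [AddCommGroup V] [Module K V] (f g : A →ₗ[K] Module.End K (V →ₗ[K] K)) (x : A) :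
    (f - g) x = f x - g x := rfl

theorem starRepAddCommGroup_neg_apply {K A V : Type*} [Field K] [AddCommGroup A] [Module K A]
    [AddCommGroup V] [Module K V] (f : A →ₗ[K] Module.End K (V →ₗ[K] K)) (x : A) :
    (-f) x = -(f x) := rfl

/-- Let `(A,·,α)` be a finite-dimensional Hom-pre-Lie algebra and
`B` a symmetric nondegenerate bilinear form on `A`, with associated isomorphism
`B♯ : A → A*`, `⟨B♯(x), y⟩ = B(x,y)`.  Then `B` is a Hessian structure on `(A,·,α)`
if and only if `(B♯)⁻¹ : A* → A` is an `O`-operator on `(A,·,α)` with respect to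
the representation `(A*, (α⁻¹)*, L⋆ − R⋆, −R⋆)` (the dual of the regular
representation, with `L = mul`, `R = mul.flip`). -/
theorem hessian_iff_oOperator
    {K A : Type*} [Field K] [AddCommGroup A] [Module K A] [FiniteDimensional K A]
    (mul : A →ₗ[K] A →ₗ[K] A) (α : A ≃ₗ[K] A)
    (hA : IsHomPreLie mul (α : A →ₗ[K] A))
    (B : A →ₗ[K] A →ₗ[K] K)
    (hsym : ∀ x y, B x y = B y x)
    (hnd : ∀ x, (∀ y, B x y = 0) → x = 0)
    -- `e` is the associated isomorphism `B♯ : A ≃ A*`: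
    (e : A ≃ₗ[K] Module.Dual K A) (he : ∀ x y, e x y = B x y) :
    IsHessian mul (α : A →ₗ[K] A) B ↔
      IsOOperator mul (α : A →ₗ[K] A)
        (α.symm.toLinearMap.dualMap)
        (starRep (α : A →ₗ[K] A) α mul - starRep (α : A →ₗ[K] A) α mul.flip)
        (- starRep (α : A →ₗ[K] A) α mul.flip)
        (e.symm : Module.Dual K A →ₗ[K] A) := by
  have hmor : ∀ a b, mul (α a) (α b) = α (mul a b) := fun a b => by
    have := hA.1 a b; simp only [LinearEquiv.coe_coe] at this; exact this.symm
  constructor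
  · rintro ⟨-, -, hinv, hcoc⟩
    simp only [LinearEquiv.coe_coe] at hinv hcoc
    have key : ∀ a b, B a (α.symm b) = B (α a) b := by
      intro a b
      conv_rhs => rw [show b = α (α.symm b) from (α.apply_symm_apply b).symm]
      rw [hinv]
    constructor
    · intro ξ
      rw [LinearEquiv.coe_coe, LinearEquiv.coe_coe, LinearEquiv.symm_apply_eq]
      ext y
      simp only [LinearMap.dualMap_apply, LinearEquiv.coe_coe, LinearMap.coe_comp,
        Function.comp_apply, LinearEquiv.coe_toLinearMap]
      rw [he, ← key, ← he, e.apply_symm_apply]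
    · intro ξ η
      obtain ⟨x, rfl⟩ : ∃ x, ξ = e x := ⟨e.symm ξ, (e.apply_symm_apply ξ).symm⟩
      obtain ⟨y, rfl⟩ : ∃ y, η = e y := ⟨e.symm η, (e.apply_symm_apply η).symm⟩
      simp only [LinearEquiv.coe_coe, e.symm_apply_apply]
      rw [LinearEquiv.eq_symm_apply]
      ext z
      obtain ⟨w, rfl⟩ : ∃ w, z = α w := ⟨α.symm z, (α.apply_symm_apply z).symm⟩
      simp only [starRep, starRepAddCommGroup_sub_apply, starRepAddCommGroup_neg_apply, LinearMap.sub_apply, LinearMap.neg_apply, LinearMap.add_apply,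
        LinearMap.coe_mk, AddHom.coe_mk, LinearMap.dualMap_apply, LinearMap.coe_comp,
        Function.comp_apply, LinearEquiv.coe_toLinearMap, LinearMap.flip_apply,
        LinearEquiv.coe_coe, he, hmor, LinearEquiv.symm_apply_apply, key]
      linear_combination hcoc x w y + hsym (α y) (mul x w) - hsym (α y) (mul w x)
        - hsym (α w) (mul x y)
  · rintro ⟨h1, h2⟩
    have hinv : ∀ a b, B ((α : A →ₗ[K] A) a) ((α : A →ₗ[K] A) b) = B a b := by
      intro a b
      have h := h1 (e a)
      simp only [LinearEquiv.coe_coe, e.symm_apply_apply] at h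
      rw [LinearEquiv.symm_apply_eq] at h
      have h' := congrArg (fun φ => φ (α b)) h
      simp only [LinearMap.dualMap_apply, LinearEquiv.coe_coe, LinearMap.coe_comp,
        Function.comp_apply, LinearEquiv.coe_toLinearMap, LinearEquiv.symm_apply_apply,
        he] at h'
      rw [LinearEquiv.coe_coe]
      exact (h'.symm)
    have hinv' : ∀ a b, B (α a) (α b) = B a b := fun a b => by
      have := hinv a b; simp only [LinearEquiv.coe_coe] at this; exact this
    have key : ∀ a b, B a (α.symm b) = B (α a) b := by
      intro a b
      conv_rhs => rw [show b = α (α.symm b) from (α.apply_symm_apply b).symm]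
      rw [hinv']
    have star : ∀ x y w, B (mul x y) (α w)
        = -B (α y) (mul x w) + B (α y) (mul w x) + B (α x) (mul w y) := by
      intro x y w
      have h := h2 (e x) (e y)
      simp only [LinearEquiv.coe_coe, e.symm_apply_apply] at h
      rw [LinearEquiv.eq_symm_apply] at h
      have h' := congrArg (fun φ => φ (α w)) h
      simp only [starRep, starRepAddCommGroup_sub_apply, starRepAddCommGroup_neg_apply, LinearMap.sub_apply, LinearMap.neg_apply, LinearMap.add_apply,
        LinearMap.coe_mk, AddHom.coe_mk, LinearMap.dualMap_apply, LinearMap.coe_comp,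
        Function.comp_apply, LinearEquiv.coe_toLinearMap, LinearMap.flip_apply,
        LinearEquiv.coe_coe, he, hmor, LinearEquiv.symm_apply_apply, key] at h'
      linear_combination h'
    refine ⟨hsym, hnd, hinv, ?_⟩
    intro x y z
    simp only [LinearEquiv.coe_coe]
    linear_combination star x y z - star y x z
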